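/- arXiv:1203.6879 — 5 statements merged into one kernel-verified Lean document; each statement's English description precedes it below -/
import Mathlib

section
/- Let ψ : [0,∞) → ℝ be continuous with ψ(0) ≥ 1. Suppose φ, η : [0,∞) → ℝ are continuous functions such that: (i) φ = ψ + η; (ii) φ(t) ≥ 1 for all t ≥ 0; (iii) η is nondecreasing and η(0) = 0; (iv) η is constant on every interval [a,b] ⊆ [0,∞) on which φ(s) > 1 for all s ∈ [a,b]. Then φ = Γ(ψ) and η = Γ(ψ) − ψ. -/
open Set

/-- The Skorohod map with reflection at 1:
`Γ(ψ)(t) = (ψ(t) + 1) − inf_{0 ≤ s ≤ t} (ψ(s) ∧ 1)`. -/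
noncomputable def skorohod (ψ : ℝ → ℝ) (t : ℝ) : ℝ :=
  (ψ t + 1) - sInf ((fun s => min (ψ s) 1) '' Icc 0 t)

/-- Characterization of the Skorohod map: if `ψ` is continuous with `ψ(0) ≥ 1`,
and continuous `φ, η` satisfy (i) `φ = ψ + η` on `[0,∞)`; (ii) `φ ≥ 1` on
`[0,∞)`; (iii) `η` is nondecreasing on `[0,∞)` with `η(0) = 0`; (iv) `η` is
constant on every interval `[a,b] ⊆ [0,∞)` on which `φ > 1`; then `φ = Γ(ψ)`
and `η = Γ(ψ) − ψ` on `[0,∞)`. -/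
theorem skorohod_characterization (ψ φ η : ℝ → ℝ)
    (hψ : ContinuousOn ψ (Ici 0)) (h0 : 1 ≤ ψ 0)
    (hφc : ContinuousOn φ (Ici 0)) (hηc : ContinuousOn η (Ici 0))
    (hsum : ∀ t : ℝ, 0 ≤ t → φ t = ψ t + η t)
    (hφ1 : ∀ t : ℝ, 0 ≤ t → 1 ≤ φ t)
    (hηmono : MonotoneOn η (Ici 0)) (hη0 : η 0 = 0)
    (hflat : ∀ a b : ℝ, 0 ≤ a → a ≤ b → (∀ s ∈ Icc a b, 1 < φ s) →
      ∀ s ∈ Icc a b, η s = η a) :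
    ∀ t : ℝ, 0 ≤ t → φ t = skorohod ψ t ∧ η t = skorohod ψ t - ψ t := by
  intro t ht
  have hIcc : Icc (0:ℝ) t ⊆ Ici 0 := fun s hs => hs.1
  set S := (fun s => min (ψ s) 1) '' Icc 0 t with hSdef
  have h0mem : (0:ℝ) ∈ Icc (0:ℝ) t := ⟨le_refl 0, ht⟩
  have hSne : S.Nonempty := ⟨min (ψ 0) 1, ⟨0, h0mem, rfl⟩⟩
  have hcomp : IsCompact S :=
    isCompact_Icc.image_of_continuousOn ((hψ.mono hIcc).inf continuousOn_const)
  have hbdd : BddBelow S := hcomp.bddBelow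
  have hηt0 : 0 ≤ η t := by
    have := hηmono (self_mem_Ici) (mem_Ici.mpr ht) ht
    rwa [hη0] at this
  have hle : 1 - η t ≤ sInf S := by
    apply le_csInf hSne
    rintro x ⟨s, hs, rfl⟩
    have hs0 : 0 ≤ s := hs.1
    have hηs : η s ≤ η t := hηmono (mem_Ici.mpr hs0) (mem_Ici.mpr ht) hs.2
    have h1 : 1 - η t ≤ ψ s := by
      have := hφ1 s hs0
      rw [hsum s hs0] at this
      linarith
    exact le_min h1 (by linarith)
  have hge : sInf S ≤ 1 - η t := by
    rcases eq_or_lt_of_le hηt0 with h | h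
    · have hmem : min (ψ 0) 1 ∈ S := ⟨0, h0mem, rfl⟩
      have : min (ψ 0) 1 = 1 := min_eq_right h0
      calc sInf S ≤ min (ψ 0) 1 := csInf_le hbdd hmem
        _ = 1 - η t := by rw [this, ← h]; ring
    · -- η t > 0; consider s* = inf of the set where η = η t
      set T := Icc 0 t ∩ η ⁻¹' {η t} with hTdef
      have hTne : T.Nonempty := ⟨t, ⟨ht, le_refl t⟩, rfl⟩
      have hTclosed : IsClosed T :=
        (hηc.mono hIcc).preimage_isClosed_of_isClosed isClosed_Icc isClosed_singleton
      have hTcomp : IsCompact T := isCompact_Icc.of_isClosed_subset hTclosed inter_subset_left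
      set c := sInf T with hcdef
      have hcT : c ∈ T := hTcomp.sInf_mem hTne
      obtain ⟨⟨hc0, hct⟩, hcval⟩ := hcT
      have hηc_eq : η c = η t := hcval
      have hcpos : 0 < c := by
        rcases hc0.lt_or_eq with h' | h'
        · exact h'
        · exfalso; rw [← h', hη0] at hηc_eq; linarith
      have hφc1 : φ c = 1 := by
        by_contra hne
        have hlt : 1 < φ c := lt_of_le_of_ne (hφ1 c hc0) (Ne.symm hne)
        have hca : ContinuousAt φ c :=
          hφc.continuousAt (Ici_mem_nhds hcpos)
        have hev : ∀ᶠ x in nhds c, 1 < φ x := hca.eventually_const_lt hlt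
        obtain ⟨δ, hδpos, hδ⟩ := Metric.eventually_nhds_iff.mp hev
        set a := max (c - δ/2) 0 with hadef
        have ha0 : 0 ≤ a := le_max_right _ _
        have hac : a < c := by
          apply max_lt (by linarith) hcpos
        have hgt : ∀ s ∈ Icc a c, 1 < φ s := by
          intro s hs
          apply hδ
          rw [Real.dist_eq, abs_lt]
          have h1 : c - δ/2 ≤ a := le_max_left _ _
          constructor <;> [linarith [hs.1]; linarith [hs.2]]
        have hηac : η c = η a := hflat a c ha0 hac.le hgt c ⟨hac.le, le_refl c⟩
        have haT : a ∈ T := ⟨⟨ha0, hac.le.trans hct⟩, by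
          show η a = η t
          rw [← hηac, hηc_eq]⟩
        have : c ≤ a := csInf_le hTcomp.bddBelow haT
        linarith
      have hψc : ψ c = 1 - η t := by
        have := hsum c hc0
        rw [hφc1, hηc_eq] at this
        linarith
      have hmem : min (ψ c) 1 ∈ S := ⟨c, ⟨hc0, hct⟩, rfl⟩
      calc sInf S ≤ min (ψ c) 1 := csInf_le hbdd hmem
        _ ≤ ψ c := min_le_left _ _
        _ = 1 - η t := hψc
  have hM : sInf S = 1 - η t := le_antisymm hge hle
  have hφt := hsum t ht
  constructor
  · rw [skorohod, hM, hφt]; ring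
  · rw [skorohod, hM]; ring
end

section
/- Let c₁ < 0, α₁ > 0, λ₁ > 0 be real constants and let p be the density p(x) = θ x⁻¹ exp(2c₁x/α₁) on [1,∞). Then for every twice continuously differentiable function φ : ℝ → ℝ with compact support, the Echeverria-type identity holds: ∫_1^∞ ( c₁ λ₁ x φ′(x) + (1/2) α₁ λ₁ x φ″(x) ) p(x) dx = −(p(1)/2) · α₁ λ₁ · φ′(1). -/
open Set MeasureTheory

/-- Echeverria-type identity for the stationary density
`p(x) = θ x⁻¹ exp(2c₁x/α₁)` on `[1,∞)` (and `p = 0` on `(-∞,1)`), with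
`θ = (∫_1^∞ x⁻¹ exp(2c₁x/α₁) dx)⁻¹`: for every `C²` compactly supported `φ`,
`∫_1^∞ (c₁λ₁ x φ'(x) + (1/2) α₁λ₁ x φ''(x)) p(x) dx = −(p(1)/2) α₁λ₁ φ'(1)`,
where `lam₁` denotes the constant `λ₁ > 0`. -/
theorem echeverria_identity (c₁ α₁ lam₁ θ : ℝ) (p : ℝ → ℝ)
    (hc₁ : c₁ < 0) (hα₁ : 0 < α₁) (hlam₁ : 0 < lam₁)
    (hθ : θ = (∫ x in Ici (1 : ℝ), x⁻¹ * Real.exp (2 * c₁ * x / α₁))⁻¹)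
    (hp : ∀ x : ℝ, 1 ≤ x → p x = θ * x⁻¹ * Real.exp (2 * c₁ * x / α₁))
    (hp0 : ∀ x : ℝ, x < 1 → p x = 0)
    (φ : ℝ → ℝ) (hφ : ContDiff ℝ 2 φ) (hφc : HasCompactSupport φ) :
    ∫ x in Ici (1 : ℝ),
        (c₁ * lam₁ * x * deriv φ x + (1 / 2) * α₁ * lam₁ * x * deriv (deriv φ) x) * p x =
      -(p 1 / 2) * (α₁ * lam₁) * deriv φ 1 := by
  have hα : α₁ ≠ 0 := ne_of_gt hα₁
  set k : ℝ := 2 * c₁ / α₁ with hk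
  -- regularity of φ
  have hφ1 : ContDiff ℝ 1 (deriv φ) := by
    have h := (contDiff_succ_iff_deriv (n := 1)).mp (by exact_mod_cast hφ)
    exact h.2.2
  have hdφ : Differentiable ℝ (deriv φ) := hφ1.differentiable one_ne_zero
  have hcφ'' : Continuous (deriv (deriv φ)) := by
    have h := (contDiff_succ_iff_deriv (n := 0)).mp (by exact_mod_cast hφ1)
    exact h.2.2.continuous
  have hcφ' : Continuous (deriv φ) := hφ1.continuous
  have hsupp' : HasCompactSupport (deriv φ) := hφc.deriv
  have hsupp'' : HasCompactSupport (deriv (deriv φ)) := hsupp'.deriv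
  -- the antiderivative
  set g : ℝ → ℝ := fun x => lam₁ * θ * (α₁ / 2) * (deriv φ x * Real.exp (k * x)) with hg
  set G : ℝ → ℝ := fun x =>
      lam₁ * θ * (α₁ / 2) * (deriv (deriv φ) x * Real.exp (k * x)
        + deriv φ x * (Real.exp (k * x) * k)) with hG
  have hgderiv : ∀ x : ℝ, HasDerivAt g (G x) x := by
    intro x
    have h1 : HasDerivAt (deriv φ) (deriv (deriv φ) x) x := (hdφ x).hasDerivAt
    have h2 : HasDerivAt (fun x => Real.exp (k * x)) (Real.exp (k * x) * k) x := by
      simpa using (((hasDerivAt_id x).const_mul k).exp)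
    simpa [hg, hG, mul_comm, mul_assoc, mul_left_comm] using ((h1.mul h2).const_mul (lam₁ * θ * (α₁ / 2)))
  -- G matches the integrand on [1, ∞)
  have hF : ∀ x : ℝ, 1 ≤ x →
      (c₁ * lam₁ * x * deriv φ x + (1 / 2) * α₁ * lam₁ * x * deriv (deriv φ) x) * p x = G x := by
    intro x hx
    have hx0 : x ≠ 0 := by positivity
    rw [hp x hx, hG]
    have he : Real.exp (2 * c₁ * x / α₁) = Real.exp (k * x) := by
      rw [hk]; ring_nf
    rw [he, hk]
    field_simp
    ring
  -- G integrable (continuous with compact support)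
  have hGc : Continuous G := by
    fun_prop
  have hGsupp : HasCompactSupport G := by
    have : HasCompactSupport (fun x => deriv (deriv φ) x * Real.exp (k * x)
        + deriv φ x * (Real.exp (k * x) * k)) :=
      (hsupp''.mul_right).add (hsupp'.mul_right)
    exact this.mul_left
  have hGint : IntegrableOn G (Ioi (1:ℝ)) := (hGc.integrable_of_hasCompactSupport hGsupp).integrableOn
  -- g tends to 0 at infinity
  have hgtend : Filter.Tendsto g Filter.atTop (nhds 0) := by
    have hbdd : BddAbove (tsupport (deriv φ)) := hsupp'.isCompact.bddAbove
    obtain ⟨R, hR⟩ := hbdd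
    refine tendsto_const_nhds.congr' ?_
    filter_upwards [Filter.eventually_gt_atTop R] with x hx
    have hnot : x ∉ tsupport (deriv φ) := fun h => absurd (hR h) (not_le.mpr hx)
    have : deriv φ x = 0 := image_eq_zero_of_notMem_tsupport hnot
    simp [hg, this]
  -- FTC on (1, ∞)
  have key : ∫ x in Ioi (1:ℝ), G x = 0 - g 1 :=
    integral_Ioi_of_hasDerivAt_of_tendsto' (fun x _ => hgderiv x) hGint hgtend
  -- conclude
  rw [show (Ici (1:ℝ)) = Ici (1:ℝ) from rfl]
  rw [MeasureTheory.integral_Ici_eq_integral_Ioi]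
  rw [setIntegral_congr_fun measurableSet_Ioi (fun x hx => hF x (le_of_lt hx)), key]
  have hp1 : p 1 = θ * Real.exp k := by
    rw [hp 1 le_rfl]; norm_num [hk]
  rw [hg, hp1]
  simp only [mul_one]
  ring
end

section
/- Let (μ⁽ⁿ⁾)_{n≥1} be probability distributions on ℕ satisfying: (a) the mean m⁽ⁿ⁾ := Σ_k k μ⁽ⁿ⁾(k) equals 1 + c⁽ⁿ⁾/n with c⁽ⁿ⁾ < 0 for every n and c⁽ⁿ⁾ → c for some c < 0; (b) α⁽ⁿ⁾ := Σ_k (k−1)² μ⁽ⁿ⁾(k) ∈ (0,∞) for every n and α⁽ⁿ⁾ → α for some α ∈ (0,∞); (c) for some δ̄ > 0, sup_n Σ_k e^{δ̄ k} μ⁽ⁿ⁾(k) < ∞. Then there exist δ₀ ∈ (0, δ̄] and constants d₁, d₂ ∈ (0,∞) such that for every δ ∈ [0, δ₀] and every n ≥ 1, −δ d₂ ≤ Σ_{k=0}^∞ n² ( e^{(k−1)δ/n} − 1 ) μ⁽ⁿ⁾(k) ≤ −δ d₁ (all the series here being absolutely convergent). -/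
open Filter

lemma exp_taylor_lb (x : ℝ) : 0 ≤ Real.exp x - 1 - x := by
  nlinarith [Real.add_one_le_exp x]

lemma exp_taylor_ub (x : ℝ) : Real.exp x - 1 - x ≤ x ^ 2 * Real.exp |x| := by
  rcases le_or_gt 0 x with hx | hx
  · rw [abs_of_nonneg hx]
    have h1 := Real.add_one_le_exp (-x)
    have h2 := Real.add_one_le_exp x
    have h3 : Real.exp (-x) * Real.exp x = 1 := by
      rw [← Real.exp_add]; simp
    nlinarith [Real.exp_pos x, Real.exp_pos (-x), mul_nonneg hx hx]
  · rw [abs_of_neg hx]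
    have h1 := Real.add_one_le_exp (-x)
    have h3 : Real.exp (-x) * Real.exp x = 1 := by
      rw [← Real.exp_add]; simp
    have h4 : 1 ≤ Real.exp (-x) := by
      rw [Real.one_le_exp_iff]; linarith
    have h5 : Real.exp x ≤ 1 + x + x ^ 2 := by
      nlinarith [Real.exp_pos x, Real.exp_pos (-x)]
    nlinarith [sq_nonneg x]

lemma c_unif_bound (c : ℕ → ℝ) (cLim : ℝ) (hc : ∀ n, 1 ≤ n → c n < 0)
    (hcLim : Tendsto c atTop (nhds cLim)) (hcLim0 : cLim < 0) :
    ∃ b B : ℝ, 0 < b ∧ 0 < B ∧ ∀ n, 1 ≤ n → -B ≤ c n ∧ c n ≤ -b := by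
  obtain ⟨N, hN⟩ := (Metric.tendsto_atTop.1 hcLim) (-cLim/2) (by linarith)
  set N' := max N 1 with hN'
  have hne : (Finset.Icc 1 N').Nonempty := ⟨1, by simp [hN', Nat.le_max_right]⟩
  set b := min (-cLim/2) ((Finset.Icc 1 N').inf' hne (fun n => -c n)) with hb
  set B := max (-2*cLim) ((Finset.Icc 1 N').sup' hne (fun n => -c n)) with hB
  refine ⟨b, B, ?_, ?_, ?_⟩
  · apply lt_min (by linarith)
    refine (Finset.lt_inf'_iff hne).2 ?_
    intro i hi
    have := hc i (Finset.mem_Icc.1 hi).1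
    linarith
  · exact lt_of_lt_of_le (by linarith) (le_max_left _ _)
  · intro n hn
    rcases le_or_gt n N' with h | h
    · have hmem : n ∈ Finset.Icc 1 N' := Finset.mem_Icc.2 ⟨hn, h⟩
      constructor
      · have := Finset.le_sup' (fun n => -c n) hmem
        have hBle : -c n ≤ B := le_trans this (le_max_right _ _)
        linarith
      · have := Finset.inf'_le (fun n => -c n) hmem
        have : b ≤ -c n := le_trans (min_le_right _ _) this
        linarith
    · have hnN : N ≤ n := le_trans (le_max_left N 1) (le_of_lt h)
      have := hN n hnN
      rw [Real.dist_eq, abs_lt] at this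
      constructor
      · have : -2*cLim ≤ B := le_max_left _ _
        linarith
      · have : b ≤ -cLim/2 := min_le_left _ _
        linarith

lemma sq_le_expbound (δbar : ℝ) (hδbar : 0 < δbar) (k : ℕ) :
    ((k:ℝ) - 1)^2 ≤ (16/δbar^2 + 1) * Real.exp (δbar/2 * k) := by
  have hA := Real.add_one_le_exp (δbar/4 * k)
  have hE : Real.exp (δbar/2 * (k:ℝ)) = Real.exp (δbar/4 * k) ^ 2 := by
    rw [sq, ← Real.exp_add]; ring_nf
  have hk : (0:ℝ) ≤ k := Nat.cast_nonneg k
  have key : δbar^2 * ((k:ℝ)-1)^2 ≤ (16 + δbar^2) * Real.exp (δbar/2 * k) := by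
    rw [hE]
    have hsq : (δbar/4*(k:ℝ)+1)^2 ≤ Real.exp (δbar/4*k)^2 := by
      apply pow_le_pow_left₀ (by positivity) (by linarith)
    nlinarith [mul_nonneg hk hδbar.le, mul_nonneg (mul_nonneg hk hδbar.le) hδbar.le,
      mul_nonneg (mul_nonneg (mul_nonneg hk hk) hδbar.le) hδbar.le, sq_nonneg ((k:ℝ)*δbar)]
  have h2 : (0:ℝ) < δbar^2 := by positivity
  rw [div_add' _ _ _ (ne_of_gt h2), div_mul_eq_mul_div, le_div_iff₀ h2]
  nlinarith [key]

set_option maxHeartbeats 1000000 in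
/-- For a sequence of offspring distributions `μ⁽ⁿ⁾` on `ℕ` that are critical
from below (mean `1 + c⁽ⁿ⁾/n` with `c⁽ⁿ⁾ < 0`, `c⁽ⁿ⁾ → c < 0`), with second
moments `α⁽ⁿ⁾ → α ∈ (0,∞)` and uniformly bounded exponential moments of order
`δ̄`, there exist `δ₀ ∈ (0, δ̄]` and `d₁, d₂ ∈ (0,∞)` such that for all
`δ ∈ [0, δ₀]` and `n ≥ 1`,
`−δ d₂ ≤ Σ_k n² (e^{(k−1)δ/n} − 1) μ⁽ⁿ⁾(k) ≤ −δ d₁`,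
the series being absolutely (i.e. `Summable`-) convergent. -/
theorem branching_exponential_drift_bound
    (μ : ℕ → ℕ → ℝ) (c : ℕ → ℝ) (cLim αLim δbar : ℝ)
    (hμnn : ∀ n k, 0 ≤ μ n k)
    (hμprob : ∀ n, 1 ≤ n → Summable (μ n) ∧ ∑' k, μ n k = 1)
    (hmean : ∀ n, 1 ≤ n → Summable (fun k : ℕ => (k : ℝ) * μ n k) ∧
      ∑' k : ℕ, (k : ℝ) * μ n k = 1 + c n / n)
    (hc : ∀ n, 1 ≤ n → c n < 0)
    (hcLim : Tendsto c atTop (nhds cLim)) (hcLim0 : cLim < 0)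
    (hα : ∀ n, 1 ≤ n → Summable (fun k : ℕ => ((k : ℝ) - 1) ^ 2 * μ n k) ∧
      0 < ∑' k : ℕ, ((k : ℝ) - 1) ^ 2 * μ n k)
    (hαLim : Tendsto (fun n : ℕ => ∑' k : ℕ, ((k : ℝ) - 1) ^ 2 * μ n k)
      atTop (nhds αLim))
    (hαLim0 : 0 < αLim)
    (hδbar : 0 < δbar)
    (hmgf : ∃ M : ℝ, ∀ n, 1 ≤ n →
      Summable (fun k : ℕ => Real.exp (δbar * k) * μ n k) ∧
      ∑' k : ℕ, Real.exp (δbar * k) * μ n k ≤ M) :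
    ∃ δ₀ d₁ d₂ : ℝ, 0 < δ₀ ∧ δ₀ ≤ δbar ∧ 0 < d₁ ∧ 0 < d₂ ∧
      ∀ δ : ℝ, 0 ≤ δ → δ ≤ δ₀ → ∀ n : ℕ, 1 ≤ n →
        Summable (fun k : ℕ =>
          (n : ℝ) ^ 2 * (Real.exp (((k : ℝ) - 1) * δ / n) - 1) * μ n k) ∧
        -(δ * d₂) ≤
          (∑' k : ℕ, (n : ℝ) ^ 2 * (Real.exp (((k : ℝ) - 1) * δ / n) - 1) * μ n k) ∧
        (∑' k : ℕ, (n : ℝ) ^ 2 * (Real.exp (((k : ℝ) - 1) * δ / n) - 1) * μ n k) ≤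
          -(δ * d₁) := by
  obtain ⟨M, hM⟩ := hmgf
  obtain ⟨b, B, hb0, hB0, hbB⟩ := c_unif_bound c cLim hc hcLim hcLim0
  -- M ≥ 1
  have hM1 : (1:ℝ) ≤ M := by
    have h1 := hμprob 1 le_rfl
    have h2 := hM 1 le_rfl
    calc (1:ℝ) = ∑' k, μ 1 k := h1.2.symm
      _ ≤ ∑' k : ℕ, Real.exp (δbar * k) * μ 1 k := by
          apply Summable.tsum_le_tsum _ h1.1 h2.1
          intro k
          nlinarith [Real.one_le_exp_iff.2 (by positivity : (0:ℝ) ≤ δbar * k), hμnn 1 k]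
      _ ≤ M := h2.2
  set C : ℝ := 16/δbar^2 + 1 with hC
  have hC0 : 0 < C := by positivity
  set D : ℝ := C * Real.exp (δbar/4) with hD
  have hD0 : 0 < D := by positivity
  have hK0 : 0 < D * M := by nlinarith
  set δ₀ := min (δbar/4) (b/(2*(D*M))) with hδ₀
  have hδ₀0 : 0 < δ₀ := lt_min (by linarith) (by positivity)
  have hδ₀K : δ₀ * (D*M) ≤ b/2 := by
    have h := min_le_right (δbar/4) (b/(2*(D*M)))
    rw [← hδ₀] at h
    calc δ₀ * (D*M) ≤ b/(2*(D*M)) * (D*M) := by nlinarith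
      _ = b/2 := by field_simp
  refine ⟨δ₀, b/2, B, hδ₀0, le_trans (min_le_left _ _) (by linarith), by linarith, hB0, ?_⟩
  intro δ hδ0 hδδ₀ n hn
  have hn1 : (1:ℝ) ≤ (n:ℝ) := by exact_mod_cast hn
  have hnne : (n:ℝ) ≠ 0 := by positivity
  have hμS := (hμprob n hn).1
  have hkS := (hmean n hn).1
  have hES := (hM n hn).1
  -- summability of (k-1)μ
  have hsubS : Summable (fun k : ℕ => ((k:ℝ) - 1) * μ n k) := by
    have := hkS.sub hμS
    simpa [sub_mul] using this
  have hsubT : ∑' k : ℕ, ((k:ℝ) - 1) * μ n k = c n / n := by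
    have := Summable.tsum_sub hkS hμS
    have h2 : ∑' k : ℕ, ((k:ℝ) - 1) * μ n k
        = ∑' k : ℕ, ((k:ℝ) * μ n k - μ n k) := by
      congr 1; funext k; ring
    rw [h2, this, (hmean n hn).2, (hμprob n hn).2]; ring
  -- the pieces
  set g : ℕ → ℝ := fun k => (n:ℝ) * δ * (((k:ℝ) - 1) * μ n k) with hg
  set h : ℕ → ℝ := fun k =>
    (n:ℝ)^2 * (Real.exp (((k:ℝ) - 1) * δ / n) - 1 - ((k:ℝ) - 1) * δ / n) * μ n k with hh
  have hfg : ∀ k : ℕ, (n:ℝ)^2 * (Real.exp (((k:ℝ) - 1) * δ / n) - 1) * μ n k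
      = g k + h k := by
    intro k
    simp only [hg, hh]
    field_simp
    ring
  have hhnn : ∀ k, 0 ≤ h k := by
    intro k
    apply mul_nonneg _ (hμnn n k)
    apply mul_nonneg (by positivity)
    exact exp_taylor_lb _
  -- pointwise bound on h
  have hhle : ∀ k : ℕ, h k ≤ δ^2 * D * (Real.exp (δbar * k) * μ n k) := by
    intro k
    have hx : |((k:ℝ) - 1) * δ / n| ≤ δbar/4 + δbar/4 * k := by
      rw [abs_div, abs_of_nonneg (by positivity : (0:ℝ) ≤ (n:ℝ)), abs_mul,
        abs_of_nonneg hδ0]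
      have h1 : |(k:ℝ) - 1| ≤ (k:ℝ) + 1 := by
        rw [abs_le]; constructor <;> [linarith [Nat.cast_nonneg (α := ℝ) k]; linarith]
      have hδ4 : δ ≤ δbar/4 := le_trans hδδ₀ (min_le_left _ _)
      calc |(k:ℝ) - 1| * δ / n ≤ |(k:ℝ) - 1| * δ := by
            apply div_le_self (by positivity) hn1
        _ ≤ ((k:ℝ) + 1) * δ := by nlinarith [abs_nonneg ((k:ℝ)-1)]
        _ ≤ ((k:ℝ) + 1) * (δbar/4) := by
            nlinarith [Nat.cast_nonneg (α := ℝ) k]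
        _ = δbar/4 + δbar/4 * k := by ring
    have hexp : Real.exp |((k:ℝ) - 1) * δ / n| ≤ Real.exp (δbar/4) * Real.exp (δbar/4 * k) := by
      rw [← Real.exp_add]
      exact Real.exp_le_exp.2 hx
    have htay := exp_taylor_ub (((k:ℝ) - 1) * δ / n)
    have hx2 : (n:ℝ)^2 * ((((k:ℝ) - 1) * δ / n)^2) = ((k:ℝ)-1)^2 * δ^2 := by
      field_simp
    have hC2 := sq_le_expbound δbar hδbar k
    have hmain : (n:ℝ)^2 * (Real.exp (((k:ℝ) - 1) * δ / n) - 1 - ((k:ℝ) - 1) * δ / n)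
        ≤ δ^2 * D * Real.exp (δbar * k) := by
      calc (n:ℝ)^2 * (Real.exp (((k:ℝ) - 1) * δ / n) - 1 - ((k:ℝ) - 1) * δ / n)
          ≤ (n:ℝ)^2 * ((((k:ℝ) - 1) * δ / n)^2 * Real.exp |((k:ℝ) - 1) * δ / n|) := by
            apply mul_le_mul_of_nonneg_left htay (by positivity)
        _ = ((k:ℝ)-1)^2 * δ^2 * Real.exp |((k:ℝ) - 1) * δ / n| := by
            rw [← mul_assoc, hx2]
        _ ≤ ((k:ℝ)-1)^2 * δ^2 * (Real.exp (δbar/4) * Real.exp (δbar/4 * k)) := by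
            apply mul_le_mul_of_nonneg_left hexp (by positivity)
        _ ≤ C * Real.exp (δbar/2 * k) * δ^2 * (Real.exp (δbar/4) * Real.exp (δbar/4 * k)) :=
            mul_le_mul_of_nonneg_right
              (mul_le_mul_of_nonneg_right hC2 (sq_nonneg δ)) (by positivity)
        _ = δ^2 * D * (Real.exp (δbar/2 * k) * Real.exp (δbar/4 * k)) := by
            rw [hD]; ring
        _ ≤ δ^2 * D * Real.exp (δbar * k) := by
            apply mul_le_mul_of_nonneg_left _ (by positivity)
            rw [← Real.exp_add]
            apply Real.exp_le_exp.2
            nlinarith [Nat.cast_nonneg (α := ℝ) k]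
    calc h k ≤ (δ^2 * D * Real.exp (δbar * k)) * μ n k :=
          mul_le_mul_of_nonneg_right hmain (hμnn n k)
      _ = δ^2 * D * (Real.exp (δbar * k) * μ n k) := by ring
  have hgS : Summable g := hsubS.mul_left _
  have hhS : Summable h := by
    apply Summable.of_nonneg_of_le hhnn hhle
    exact hES.mul_left _
  have hfS : Summable (fun k : ℕ =>
      (n:ℝ)^2 * (Real.exp (((k:ℝ) - 1) * δ / n) - 1) * μ n k) := by
    have := hgS.add hhS
    apply this.congr
    intro k
    exact (hfg k).symm
  have hT : (∑' k : ℕ, (n:ℝ)^2 * (Real.exp (((k:ℝ) - 1) * δ / n) - 1) * μ n k)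
      = δ * c n + ∑' k, h k := by
    rw [tsum_congr hfg, Summable.tsum_add hgS hhS]
    congr 1
    rw [hg, tsum_mul_left, hsubT]
    field_simp
  have hR0 : 0 ≤ ∑' k, h k := tsum_nonneg hhnn
  have hRle : ∑' k, h k ≤ δ^2 * (D * M) := by
    calc ∑' k, h k ≤ ∑' k : ℕ, δ^2 * D * (Real.exp (δbar * k) * μ n k) :=
          Summable.tsum_le_tsum hhle hhS (hES.mul_left _)
      _ = δ^2 * D * ∑' k : ℕ, Real.exp (δbar * k) * μ n k := tsum_mul_left
      _ ≤ δ^2 * D * M :=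
          mul_le_mul_of_nonneg_left (hM n hn).2 (mul_nonneg (sq_nonneg δ) hD0.le)
      _ = δ^2 * (D * M) := by ring
  have hcb := hbB n hn
  refine ⟨hfS, ?_, ?_⟩
  · rw [hT]
    have e1 : δ * (-B) ≤ δ * c n := mul_le_mul_of_nonneg_left hcb.1 hδ0
    linarith
  · rw [hT]
    have e1 : δ * c n ≤ δ * (-b) := mul_le_mul_of_nonneg_left hcb.2 hδ0
    have e2 : δ^2 ≤ δ * δ₀ := by nlinarith
    have e3 : δ^2 * (D*M) ≤ (δ*δ₀)*(D*M) := mul_le_mul_of_nonneg_right e2 hK0.le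
    have e4 : δ*(δ₀*(D*M)) ≤ δ*(b/2) := mul_le_mul_of_nonneg_left hδ₀K hδ0
    linarith
end

section
/- Let (Ω, 𝓕, P) be a probability space and X : [0,∞) × Ω → ℝ a jointly measurable process such that for every u > 0 the map ω ↦ ∫_0^u X_s(ω) ds is well defined and integrable. Let m ∈ ℝ and set F(u) := E| (1/u) ∫_0^u X_s ds − m | for u > 0. Suppose F(u) → 0 as u → ∞. Let 0 < t₀ ≤ T < ∞ and let (a_n) be a sequence of positive reals with a_n → ∞ monotonically. Then there exists a sequence (h_n) of positive reals with h_n → 0 such that sup_{t ∈ [t₀, T]} E| (1/(h_n a_n)) ∫_{t a_n}^{t a_n + h_n a_n} X_s ds − m | → 0 as n → ∞. -/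
open MeasureTheory Filter Set

/-- Averaging lemma on shifted integral limits: if the time averages
`(1/u)∫_0^u X_s ds` of a jointly measurable process `X` converge to `m` in
`L¹(P)` as `u → ∞`, and `a_n → ∞` monotonically, then there is a sequence
`h_n → 0` such that
`sup_{t ∈ [t₀,T]} E|(1/(h_n a_n)) ∫_{t a_n}^{t a_n + h_n a_n} X_s ds − m| → 0`. -/
theorem shifted_integral_averaging {Ω : Type*} [MeasurableSpace Ω]
    (P : Measure Ω) [IsProbabilityMeasure P] (X : ℝ → Ω → ℝ)
    (hXm : Measurable fun p : ℝ × Ω => X p.1 p.2)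
    (hwd : ∀ u : ℝ, 0 < u → ∀ ω : Ω, IntegrableOn (fun s => X s ω) (Icc 0 u))
    (hint : ∀ u : ℝ, 0 < u →
      Integrable (fun ω : Ω => ∫ s in Icc (0 : ℝ) u, X s ω) P)
    (m : ℝ)
    (hF : Tendsto
      (fun u : ℝ => ∫ ω, |(1 / u) * (∫ s in Icc (0 : ℝ) u, X s ω) - m| ∂P)
      atTop (nhds 0))
    (t₀ T : ℝ) (ht₀ : 0 < t₀) (hT : t₀ ≤ T)
    (a : ℕ → ℝ) (ha : ∀ n, 0 < a n) (hamono : Monotone a)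
    (hatop : Tendsto a atTop atTop) :
    ∃ h : ℕ → ℝ, (∀ n, 0 < h n) ∧ Tendsto h atTop (nhds 0) ∧
      Tendsto (fun n : ℕ =>
        sSup ((fun t : ℝ => ∫ ω, |(1 / (h n * a n)) *
          (∫ s in Icc (t * a n) (t * a n + h n * a n), X s ω) - m| ∂P) ''
            Icc t₀ T))
        atTop (nhds 0) := by
  classical
  set F : ℝ → ℝ :=
    fun u : ℝ => ∫ ω, |(1 / u) * (∫ s in Icc (0 : ℝ) u, X s ω) - m| ∂P with hFdef
  have hFnn : ∀ u, 0 ≤ F u := fun u => integral_nonneg fun ω => abs_nonneg _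
  have hta : Tendsto (fun n => t₀ * a n) atTop atTop := hatop.const_mul_atTop ht₀
  set g : ℕ → ℝ := fun n => sSup (F '' Ici (t₀ * a n)) with hgdef
  obtain ⟨M, hM⟩ : ∃ M : ℝ, ∀ u, M ≤ u → F u ≤ 1 := by
    obtain ⟨M, hM⟩ := eventually_atTop.mp (hF.eventually_lt_const one_pos)
    exact ⟨M, fun u hu => (hM u hu).le⟩
  have hEv : ∀ᶠ n in atTop, M ≤ t₀ * a n := hta.eventually_ge_atTop M
  have hbdd : ∀ n, M ≤ t₀ * a n → BddAbove (F '' Ici (t₀ * a n)) := by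
    intro n hn
    exact ⟨1, by rintro x ⟨u, hu, rfl⟩; exact hM u (hn.trans hu)⟩
  have hle : ∀ n, M ≤ t₀ * a n → ∀ u, t₀ * a n ≤ u → F u ≤ g n := by
    intro n hn u hu
    exact le_csSup (hbdd n hn) ⟨u, hu, rfl⟩
  have hg0 : ∀ n, M ≤ t₀ * a n → 0 ≤ g n := fun n hn =>
    (hFnn _).trans (hle n hn _ le_rfl)
  -- g tends to 0
  have hgt : Tendsto g atTop (nhds 0) := by
    rw [Metric.tendsto_atTop]
    intro ε hε
    obtain ⟨M', hM'⟩ := eventually_atTop.mp (hF.eventually_lt_const (half_pos hε))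
    obtain ⟨N, hN⟩ := eventually_atTop.mp (hta.eventually_ge_atTop (max M M'))
    refine ⟨N, fun n hn => ?_⟩
    have h3 := hN n hn
    have hMn : M ≤ t₀ * a n := (le_max_left _ _).trans h3
    have hM'n : M' ≤ t₀ * a n := (le_max_right _ _).trans h3
    have hub : g n ≤ ε / 2 := by
      refine csSup_le ⟨F (t₀ * a n), ⟨t₀ * a n, self_mem_Ici, rfl⟩⟩ ?_
      rintro x ⟨u, hu, rfl⟩
      exact (hM' u (hM'n.trans hu)).le
    have hlb : 0 ≤ g n := hg0 n hMn
    rw [Real.dist_eq, sub_zero, abs_of_nonneg hlb]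
    linarith
  set hh : ℕ → ℝ := fun n => Real.sqrt (g n) + ((n : ℝ) + 1)⁻¹ with hhdef
  have hhpos : ∀ n, 0 < hh n := by
    intro n
    have h1 : (0 : ℝ) < ((n : ℝ) + 1)⁻¹ := by positivity
    have h2 := Real.sqrt_nonneg (g n)
    simp only [hhdef]
    linarith
  have hstle : ∀ n, Real.sqrt (g n) ≤ hh n := by
    intro n
    have h1 : (0 : ℝ) ≤ ((n : ℝ) + 1)⁻¹ := by positivity
    simp only [hhdef]
    linarith
  have hsq : Tendsto (fun n => Real.sqrt (g n)) atTop (nhds 0) := by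
    have := (Real.continuous_sqrt.tendsto 0).comp hgt
    simpa [Function.comp_def] using this
  refine ⟨hh, hhpos, ?_, ?_⟩
  · have h2 : Tendsto (fun n : ℕ => ((n : ℝ) + 1)⁻¹) atTop (nhds 0) := by
      simpa [one_div] using tendsto_one_div_add_atTop_nhds_zero_nat (𝕜 := ℝ)
    simpa using hsq.add h2
  · -- main convergence
    have hB : Tendsto (fun n => 2 * T * Real.sqrt (g n) + g n) atTop (nhds 0) := by
      have h1 : Tendsto (fun n => 2 * T * Real.sqrt (g n)) atTop (nhds 0) := by
        have := hsq.const_mul (2 * T)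
        simpa using this
      simpa using h1.add hgt
    have hkey : ∀ᶠ n in atTop, ∀ t ∈ Icc t₀ T,
        (∫ ω, |(1 / (hh n * a n)) *
          (∫ s in Icc (t * a n) (t * a n + hh n * a n), X s ω) - m| ∂P)
          ≤ 2 * T * Real.sqrt (g n) + g n := by
      filter_upwards [hEv] with n hn
      rintro t ⟨ht1, ht2⟩
      have haan : 0 < a n := ha n
      have hgn0 : 0 ≤ g n := hg0 n hn
      have ht' : 0 < t := lt_of_lt_of_le ht₀ ht1
      have hb : 0 < t * a n := mul_pos ht' haan
      have hha : 0 < hh n * a n := mul_pos (hhpos n) haan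
      have hc : 0 < t * a n + hh n * a n := by linarith
      have hbc : t * a n ≤ t * a n + hh n * a n := by linarith
      -- splitting of the integral
      have hsplit : ∀ ω, (∫ s in Icc (t * a n) (t * a n + hh n * a n), X s ω)
          = (∫ s in Icc (0 : ℝ) (t * a n + hh n * a n), X s ω)
            - ∫ s in Icc (0 : ℝ) (t * a n), X s ω := by
        intro ω
        have hI : IntegrableOn (fun s => X s ω) (Icc 0 (t * a n + hh n * a n)) :=
          hwd _ hc ω
        have hI1 : IntegrableOn (fun s => X s ω) (Ioc 0 (t * a n)) :=
          hI.mono_set fun x hx => ⟨hx.1.le, hx.2.trans hbc⟩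
        have hI2 : IntegrableOn (fun s => X s ω)
            (Ioc (t * a n) (t * a n + hh n * a n)) :=
          hI.mono_set fun x hx => ⟨hb.le.trans hx.1.le, hx.2⟩
        rw [integral_Icc_eq_integral_Ioc, integral_Icc_eq_integral_Ioc,
          integral_Icc_eq_integral_Ioc]
        have hu : Ioc (0 : ℝ) (t * a n) ∪ Ioc (t * a n) (t * a n + hh n * a n)
            = Ioc 0 (t * a n + hh n * a n) := Ioc_union_Ioc_eq_Ioc hb.le hbc
        have hdisj : Disjoint (Ioc (0 : ℝ) (t * a n))
            (Ioc (t * a n) (t * a n + hh n * a n)) := Set.Ioc_disjoint_Ioc_of_le le_rfl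
        have hun := setIntegral_union hdisj measurableSet_Ioc hI1 hI2
          (f := fun s => X s ω) (μ := volume)
        rw [hu] at hun
        linarith [hun]
      set Ac : Ω → ℝ := fun ω =>
        (1 / (t * a n + hh n * a n)) *
          (∫ s in Icc (0 : ℝ) (t * a n + hh n * a n), X s ω) - m with hAcdef
      set Ab : Ω → ℝ := fun ω =>
        (1 / (t * a n)) * (∫ s in Icc (0 : ℝ) (t * a n), X s ω) - m with hAbdef
      have hIc : Integrable Ac P :=
        ((hint _ hc).const_mul _).sub (integrable_const m)
      have hIb : Integrable Ab P :=
        ((hint _ hb).const_mul _).sub (integrable_const m)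
      have hq0 : 0 ≤ t / hh n := div_nonneg ht'.le (hhpos n).le
      have hp0 : 0 ≤ t / hh n + 1 := by linarith
      have hpt : ∀ ω, (1 / (hh n * a n)) *
          (∫ s in Icc (t * a n) (t * a n + hh n * a n), X s ω) - m
          = (t / hh n + 1) * Ac ω - (t / hh n) * Ab ω := by
        intro ω
        rw [hsplit ω]
        simp only [hAcdef, hAbdef]
        have h1 : hh n ≠ 0 := (hhpos n).ne'
        have h2 : a n ≠ 0 := haan.ne'
        have h3 : t * a n ≠ 0 := hb.ne'
        have h4 : t * a n + hh n * a n ≠ 0 := hc.ne'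
        have h5 : t + hh n ≠ 0 := (add_pos ht' (hhpos n)).ne'
        have h6 : t ≠ 0 := ht'.ne'
        field_simp
        ring
      have step1 : (∫ ω, |(1 / (hh n * a n)) *
          (∫ s in Icc (t * a n) (t * a n + hh n * a n), X s ω) - m| ∂P)
          = ∫ ω, |(t / hh n + 1) * Ac ω - (t / hh n) * Ab ω| ∂P :=
        integral_congr_ae (Filter.Eventually.of_forall fun ω => by simp only [hpt ω])
      have step2 : (∫ ω, |(t / hh n + 1) * Ac ω - (t / hh n) * Ab ω| ∂P)
          ≤ ∫ ω, (t / hh n + 1) * |Ac ω| + (t / hh n) * |Ab ω| ∂P := by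
        apply integral_mono
        · exact ((hIc.const_mul _).sub (hIb.const_mul _)).abs
        · exact (hIc.abs.const_mul _).add (hIb.abs.const_mul _)
        · intro ω
          have h5 : |(t / hh n + 1) * Ac ω - (t / hh n) * Ab ω|
              ≤ |(t / hh n + 1) * Ac ω| + |(t / hh n) * Ab ω| := abs_sub _ _
          rw [abs_mul, abs_mul, abs_of_nonneg hp0, abs_of_nonneg hq0] at h5
          exact h5
      have step3 : (∫ ω, (t / hh n + 1) * |Ac ω| + (t / hh n) * |Ab ω| ∂P)
          = (t / hh n + 1) * F (t * a n + hh n * a n) + (t / hh n) * F (t * a n) := by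
        rw [integral_add (hIc.abs.const_mul _) (hIb.abs.const_mul _),
          integral_const_mul, integral_const_mul]
      have hFc : F (t * a n + hh n * a n) ≤ g n := by
        apply hle n hn
        have : t₀ * a n ≤ t * a n := mul_le_mul_of_nonneg_right ht1 haan.le
        linarith
      have hFb : F (t * a n) ≤ g n :=
        hle n hn _ (mul_le_mul_of_nonneg_right ht1 haan.le)
      have hfinal : (t / hh n + 1) * F (t * a n + hh n * a n)
          + (t / hh n) * F (t * a n) ≤ 2 * T * Real.sqrt (g n) + g n := by
        have e1 : (t / hh n + 1) * F (t * a n + hh n * a n)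
            ≤ (t / hh n + 1) * g n := mul_le_mul_of_nonneg_left hFc hp0
        have e2 : (t / hh n) * F (t * a n) ≤ (t / hh n) * g n :=
          mul_le_mul_of_nonneg_left hFb hq0
        have hdg : g n / hh n ≤ Real.sqrt (g n) := by
          rw [div_le_iff₀ (hhpos n)]
          nlinarith [Real.mul_self_sqrt hgn0, hstle n, Real.sqrt_nonneg (g n)]
        have hTpos : 0 ≤ T := (ht'.trans_le ht2).le
        have e3 : (t / hh n) * g n ≤ T * Real.sqrt (g n) := by
          calc (t / hh n) * g n = t * (g n / hh n) := by ring
            _ ≤ T * Real.sqrt (g n) :=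
              mul_le_mul ht2 hdg (div_nonneg hgn0 (hhpos n).le) hTpos
        nlinarith [e1, e2, e3]
      calc (∫ ω, |(1 / (hh n * a n)) *
            (∫ s in Icc (t * a n) (t * a n + hh n * a n), X s ω) - m| ∂P)
          = ∫ ω, |(t / hh n + 1) * Ac ω - (t / hh n) * Ab ω| ∂P := step1
        _ ≤ ∫ ω, (t / hh n + 1) * |Ac ω| + (t / hh n) * |Ab ω| ∂P := step2
        _ = (t / hh n + 1) * F (t * a n + hh n * a n)
            + (t / hh n) * F (t * a n) := step3
        _ ≤ 2 * T * Real.sqrt (g n) + g n := hfinal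
    apply tendsto_of_tendsto_of_tendsto_of_le_of_le' tendsto_const_nhds hB
    · filter_upwards [hkey] with n hk
      have hmem : (∫ ω, |(1 / (hh n * a n)) *
          (∫ s in Icc (t₀ * a n) (t₀ * a n + hh n * a n), X s ω) - m| ∂P)
          ∈ (fun t : ℝ => ∫ ω, |(1 / (hh n * a n)) *
            (∫ s in Icc (t * a n) (t * a n + hh n * a n), X s ω) - m| ∂P) ''
              Icc t₀ T := ⟨t₀, ⟨le_rfl, hT⟩, rfl⟩
      have hbddS : BddAbove ((fun t : ℝ => ∫ ω, |(1 / (hh n * a n)) *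
          (∫ s in Icc (t * a n) (t * a n + hh n * a n), X s ω) - m| ∂P) ''
            Icc t₀ T) := by
        refine ⟨2 * T * Real.sqrt (g n) + g n, ?_⟩
        rintro x ⟨t, ht, rfl⟩
        exact hk t ht
      exact le_trans (integral_nonneg fun ω => abs_nonneg _) (le_csSup hbddS hmem)
    · filter_upwards [hkey] with n hk
      refine csSup_le ⟨_, ⟨t₀, ⟨le_rfl, hT⟩, rfl⟩⟩ ?_
      rintro x ⟨t, ht, rfl⟩
      exact hk t ht
end

section
/- Let (μ⁽ⁿ⁾)_{n≥1} be probability distributions on ℕ and (λ⁽ⁿ⁾) positive reals satisfying: (a) λ⁽ⁿ⁾ → λ ∈ (0,∞); (b) the mean m⁽ⁿ⁾ := Σ_k k μ⁽ⁿ⁾(k) equals 1 + c⁽ⁿ⁾/n with c⁽ⁿ⁾ → c ∈ ℝ; (c) α⁽ⁿ⁾ := Σ_k (k−1)² μ⁽ⁿ⁾(k) ∈ (0,∞) and α⁽ⁿ⁾ → α ∈ (0,∞); (d) for every ε > 0, Σ_{l > ε√n} (l − m⁽ⁿ⁾)² μ⁽ⁿ⁾(l) → 0 as n → ∞. Let φ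 : ℝ → ℝ be twice continuously differentiable with compact support, and define the Taylor remainder R⁽ⁿ⁾(x) := λ⁽ⁿ⁾ n² x Σ_{k=0}^∞ [ φ(x + (k−1)/n) − φ(x) − ((k−1)/n) φ′(x) − (1/2)((k−1)/n)² φ″(x) ] μ⁽ⁿ⁾(k). Then for every L > 0, sup_{0 ≤ x ≤ L} |R⁽ⁿ⁾(x)| → 0 as n → ∞. -/
set_option maxHeartbeats 1000000


open Filter Set


lemma abs_le_of_mem_uIcc' {t h : ℝ} (ht : t ∈ uIcc (0:ℝ) h) : |t| ≤ |h| := by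
  rcases Set.mem_uIcc.mp ht with ⟨h1, h2⟩ | ⟨h1, h2⟩
  · rw [abs_of_nonneg h1]; exact le_trans h2 (le_abs_self h)
  · rw [abs_of_nonpos h2]; exact le_trans (neg_le_neg h1) (neg_le_abs h)

lemma taylor_aux {φ : ℝ → ℝ} (hφ : ContDiff ℝ 2 φ) (x h η : ℝ)
    (hη : ∀ t ∈ uIcc (0:ℝ) h, |deriv (deriv φ) (x + t) - deriv (deriv φ) x| ≤ η) :
    |φ (x + h) - φ x - h * deriv φ x - (1/2) * h^2 * deriv (deriv φ) x| ≤ η * h^2 := by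
  have h2 : ContDiff ℝ (1+1) φ := by norm_num; exact hφ
  have hφ1 : ContDiff ℝ 1 (deriv φ) := (contDiff_succ_iff_deriv.mp h2).2.2
  have hd1 : Differentiable ℝ φ := hφ.differentiable two_ne_zero
  have hd2 : Differentiable ℝ (deriv φ) := hφ1.differentiable one_ne_zero
  set D1 := deriv φ x
  set D2 := deriv (deriv φ) x with hD2
  have hη0 : 0 ≤ η := by
    have := hη 0 (left_mem_uIcc); simpa [hD2] using this
  set f1 : ℝ → ℝ := fun t => deriv φ (x + t) - t * D2 with hf1
  set f2 : ℝ → ℝ := fun t => φ (x + t) - t * D1 - t^2/2 * D2 with hf2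
  have hder1 : ∀ t, HasDerivAt f1 (deriv (deriv φ) (x + t) - D2) t := by
    intro t
    have h1 : HasDerivAt (fun t : ℝ => deriv φ (x + t)) (deriv (deriv φ) (x + t) * 1) t :=
      (hd2 (x + t)).hasDerivAt.comp t ((hasDerivAt_id t).const_add x)
    exact (h1.sub (hasDerivAt_mul_const (x := t) D2)).congr_deriv (by simp)
  have hder2 : ∀ t, HasDerivAt f2 (deriv φ (x + t) - D1 - t * D2) t := by
    intro t
    have h1 : HasDerivAt (fun t : ℝ => φ (x + t)) (deriv φ (x + t) * 1) t :=
      (hd1 (x + t)).hasDerivAt.comp t ((hasDerivAt_id t).const_add x)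
    have h3 : HasDerivAt (fun t : ℝ => t^2/2 * D2) (t * D2) t := by
      have := ((hasDerivAt_pow 2 t).div_const 2).mul_const D2
      exact this.congr_deriv (by norm_num)
    have := (h1.sub (hasDerivAt_mul_const (x := t) D1)).sub h3
    exact this.congr_deriv (by simp)
  have step1 : ∀ t ∈ uIcc (0:ℝ) h, |deriv φ (x + t) - deriv φ x - t * D2| ≤ η * |h| := by
    intro t ht
    have := (convex_uIcc (0:ℝ) h).norm_image_sub_le_of_norm_hasDerivWithin_le
      (f := f1) (f' := fun t => deriv (deriv φ) (x + t) - D2)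
      (fun s hs => (hder1 s).hasDerivWithinAt) (fun s hs => by
        rw [Real.norm_eq_abs]; exact hη s hs) left_mem_uIcc ht
    rw [Real.norm_eq_abs, Real.norm_eq_abs] at this
    simp only [hf1] at this
    calc |deriv φ (x + t) - deriv φ x - t * D2|
        = |(deriv φ (x + t) - t * D2) - (deriv φ (x + 0) - 0 * D2)| := by ring_nf
      _ ≤ η * |t - 0| := this
      _ ≤ η * |h| := by
          rw [sub_zero]; exact mul_le_mul_of_nonneg_left (abs_le_of_mem_uIcc' ht) hη0
  have step2 := (convex_uIcc (0:ℝ) h).norm_image_sub_le_of_norm_hasDerivWithin_le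
      (f := f2) (f' := fun t => deriv φ (x + t) - D1 - t * D2)
      (fun s hs => (hder2 s).hasDerivWithinAt) (fun s hs => by
        rw [Real.norm_eq_abs]; exact step1 s hs) left_mem_uIcc right_mem_uIcc
  rw [Real.norm_eq_abs, Real.norm_eq_abs] at step2
  simp only [hf2] at step2
  calc |φ (x + h) - φ x - h * D1 - (1/2) * h^2 * D2|
      = |(φ (x + h) - h * D1 - h^2/2 * D2) - (φ (x + 0) - 0 * D1 - 0^2/2 * D2)| := by ring_nf
    _ ≤ η * |h| * |h - 0| := step2
    _ = η * h^2 := by rw [sub_zero, mul_assoc, abs_mul_abs_self, ← sq]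

/-- Uniform vanishing on compacts of the Taylor remainder of the scaled
branching generator: under the near-critical assumptions and the Lindeberg
condition on the offspring distributions `μ⁽ⁿ⁾`, for every `C²` compactly
supported `φ` and every `L > 0`,
`sup_{0 ≤ x ≤ L} |R⁽ⁿ⁾(x)| → 0` as `n → ∞`, where
`R⁽ⁿ⁾(x) = λ⁽ⁿ⁾ n² x Σ_k [φ(x+(k−1)/n) − φ(x) − ((k−1)/n)φ'(x) −
(1/2)((k−1)/n)²φ''(x)] μ⁽ⁿ⁾(k)`. -/
theorem taylor_remainder_vanishes_uniformly
    (μ : ℕ → ℕ → ℝ) (lam c : ℕ → ℝ) (lamLim cLim αLim : ℝ)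
    (hμnn : ∀ n k, 0 ≤ μ n k)
    (hμprob : ∀ n, 1 ≤ n → Summable (μ n) ∧ ∑' k, μ n k = 1)
    (hlam : ∀ n, 1 ≤ n → 0 < lam n)
    (hlamLim : Tendsto lam atTop (nhds lamLim)) (hlamLim0 : 0 < lamLim)
    (hmean : ∀ n, 1 ≤ n → Summable (fun k : ℕ => (k : ℝ) * μ n k) ∧
      ∑' k : ℕ, (k : ℝ) * μ n k = 1 + c n / n)
    (hcLim : Tendsto c atTop (nhds cLim))
    (hα : ∀ n, 1 ≤ n → Summable (fun k : ℕ => ((k : ℝ) - 1) ^ 2 * μ n k) ∧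
      0 < ∑' k : ℕ, ((k : ℝ) - 1) ^ 2 * μ n k)
    (hαLim : Tendsto (fun n : ℕ => ∑' k : ℕ, ((k : ℝ) - 1) ^ 2 * μ n k)
      atTop (nhds αLim))
    (hαLim0 : 0 < αLim)
    (hlind : ∀ ε : ℝ, 0 < ε →
      Tendsto (fun n : ℕ => ∑' l : ℕ,
        if ε * Real.sqrt n < (l : ℝ) then ((l : ℝ) - (1 + c n / n)) ^ 2 * μ n l else 0)
        atTop (nhds 0))
    (φ : ℝ → ℝ) (hφ : ContDiff ℝ 2 φ) (hφc : HasCompactSupport φ) :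
    ∀ L : ℝ, 0 < L →
      Tendsto (fun n : ℕ =>
        sSup ((fun x : ℝ => |lam n * (n : ℝ) ^ 2 * x *
          ∑' k : ℕ, (φ (x + ((k : ℝ) - 1) / n) - φ x
            - (((k : ℝ) - 1) / n) * deriv φ x
            - (1 / 2) * (((k : ℝ) - 1) / n) ^ 2 * deriv (deriv φ) x) * μ n k|) ''
          Icc 0 L))
        atTop (nhds 0) := by
  intro L hL
  -- facts about the second derivative
  have h2 : ContDiff ℝ (1+1) φ := by norm_num; exact hφ
  have hφ1 : ContDiff ℝ 1 (deriv φ) := (contDiff_succ_iff_deriv.mp h2).2.2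
  have hcont2 : Continuous (deriv (deriv φ)) := hφ1.continuous_deriv le_rfl
  have hsupp2 : HasCompactSupport (deriv (deriv φ)) := hφc.deriv.deriv
  obtain ⟨M, hM⟩ := hsupp2.exists_bound_of_continuous hcont2
  have hMabs : ∀ y, |deriv (deriv φ) y| ≤ M := fun y => by
    have := hM y; rwa [Real.norm_eq_abs] at this
  have hM0 : 0 ≤ M := le_trans (abs_nonneg _) (hMabs 0)
  have hUC : UniformContinuous (deriv (deriv φ)) :=
    hsupp2.uniformContinuous_of_continuous hcont2
  rw [NormedAddCommGroup.tendsto_nhds_zero]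
  intro η hη
  set Λ := lamLim + 1 with hΛdef
  set A := αLim + 1 with hAdef
  have hΛ0 : 0 < Λ := by simp only [hΛdef]; linarith
  have hA0 : 0 < A := by simp only [hAdef]; linarith
  have hη₀0 : 0 < η / (2 * (Λ * L) * A) := by positivity
  set η₀ := η / (2 * (Λ * L) * A) with hη₀def
  have hhalf : Λ * L * (η₀ * A) = η / 2 := by
    rw [hη₀def]; field_simp
  obtain ⟨δ, hδ0, hδ⟩ : ∃ δ > 0, ∀ a b : ℝ, |a - b| ≤ δ →
      |deriv (deriv φ) a - deriv (deriv φ) b| ≤ η₀ := by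
    obtain ⟨δ, hδ0, hδ⟩ := Metric.uniformContinuous_iff.mp hUC η₀ hη₀0
    refine ⟨δ/2, half_pos hδ0, fun a b hab => ?_⟩
    have : dist a b < δ := by rw [Real.dist_eq]; linarith [half_lt_self hδ0]
    have := hδ this; rw [Real.dist_eq] at this; exact this.le
  have hc0 : Tendsto (fun n : ℕ => c n / n) atTop (nhds 0) :=
    hcLim.div_atTop tendsto_natCast_atTop_atTop
  have hLind := hlind δ hδ0
  have htail : Tendsto (fun n : ℕ => Λ * L * (2 * M) *
      (2 * (∑' l : ℕ, if δ * Real.sqrt n < (l : ℝ) then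
        ((l : ℝ) - (1 + c n / n)) ^ 2 * μ n l else 0) + 2 * (c n / n)^2))
      atTop (nhds 0) := by
    have h1 := (hLind.const_mul 2).add ((hc0.pow 2).const_mul 2)
    have h2 := h1.const_mul (Λ * L * (2 * M))
    simpa using h2
  filter_upwards [eventually_ge_atTop 1,
    hlamLim.eventually_lt_const (lt_add_one lamLim),
    hαLim.eventually_lt_const (lt_add_one αLim),
    htail.eventually_lt_const (half_pos hη),
    (tendsto_natCast_atTop_atTop.const_mul_atTop hδ0).eventually_ge_atTop 1]
    with n hn1 hlamΛ hαA htn hδn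
  -- now fixed n
  have hn0 : (0:ℝ) < (n:ℝ) := by exact_mod_cast Nat.lt_of_lt_of_le Nat.zero_lt_one hn1
  have hn2 : ((n:ℝ)^2) ≠ 0 := by positivity
  have hs0 := (hμprob n hn1).1
  have hsum1 := (hμprob n hn1).2
  have hs2 := (hα n hn1).1
  have hαnn : 0 ≤ ∑' k : ℕ, ((k : ℝ) - 1) ^ 2 * μ n k :=
    tsum_nonneg fun k => mul_nonneg (sq_nonneg _) (hμnn n k)
  set q := c n / n with hqdef
  set g : ℕ → ℝ := fun l => if δ * Real.sqrt n < (l : ℝ) then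
    ((l : ℝ) - (1 + c n / n)) ^ 2 * μ n l else 0 with hgdef
  have hg_nonneg : ∀ l, 0 ≤ g l := by
    intro l; rw [hgdef]; dsimp only; split
    · exact mul_nonneg (sq_nonneg _) (hμnn n l)
    · exact le_refl 0
  have hgle : ∀ l : ℕ, g l ≤ 2 * (((l:ℝ) - 1)^2 * μ n l) + 2 * q^2 * μ n l := by
      intro l; rw [hgdef]; dsimp only; split
      · have hb : ((l:ℝ) - (1 + c n / n))^2 ≤ 2 * ((l:ℝ) - 1)^2 + 2 * q^2 := by
          rw [hqdef]; nlinarith [sq_nonneg ((l:ℝ) - 1 + c n / n)]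
        calc ((l:ℝ) - (1 + c n / n))^2 * μ n l
            ≤ (2 * ((l:ℝ) - 1)^2 + 2 * q^2) * μ n l :=
              mul_le_mul_of_nonneg_right hb (hμnn n l)
          _ = 2 * (((l:ℝ) - 1)^2 * μ n l) + 2 * q^2 * μ n l := by ring
      · have := hμnn n l; positivity
  have hgsum : Summable g :=
    Summable.of_nonneg_of_le hg_nonneg hgle ((hs2.mul_left 2).add (hs0.mul_left (2 * q^2)))
  have hgts : 0 ≤ tsum g := tsum_nonneg hg_nonneg
  -- the tail sum
  set tg : ℕ → ℝ := fun k => if |((k:ℝ) - 1) / n| ≤ δ then 0 else ((k:ℝ) - 1)^2 * μ n k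
    with htgdef
  have htg_nonneg : ∀ k, 0 ≤ tg k := by
    intro k; rw [htgdef]; dsimp only; split
    · exact le_refl 0
    · exact mul_nonneg (sq_nonneg _) (hμnn n k)
  have htg_le : ∀ k, tg k ≤ ((k:ℝ) - 1)^2 * μ n k := by
    intro k; rw [htgdef]; dsimp only; split
    · exact mul_nonneg (sq_nonneg _) (hμnn n k)
    · exact le_refl _
  have htgsum : Summable tg := Summable.of_nonneg_of_le htg_nonneg htg_le hs2
  have htail_le : ∑' k, tg k ≤ 2 * (tsum g) + 2 * q^2 := by
    have hterm : ∀ k, tg k ≤ 2 * g k + 2 * q^2 * μ n k := by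
      intro k
      by_cases hk : |((k:ℝ) - 1) / n| ≤ δ
      · rw [htgdef]; dsimp only; rw [if_pos hk]
        have := hg_nonneg k
        have := hμnn n k
        positivity
      · have h1 : δ * (n:ℝ) < |(k:ℝ) - 1| := by
          rw [abs_div, abs_of_pos hn0, div_le_iff₀ hn0] at hk
          push_neg at hk; linarith
        have hk0 : k ≠ 0 := by
          rintro rfl
          simp only [Nat.cast_zero] at h1
          rw [show |(0:ℝ) - 1| = 1 by norm_num] at h1
          linarith
        have hk1 : (1:ℝ) ≤ (k:ℝ) := by exact_mod_cast Nat.one_le_iff_ne_zero.mpr hk0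
        have habs : |(k:ℝ) - 1| = (k:ℝ) - 1 := abs_of_nonneg (by linarith)
        have h2 : δ * Real.sqrt n < (k:ℝ) := by
          have hn1' : (1:ℝ) ≤ (n:ℝ) := by exact_mod_cast hn1
          have hs : Real.sqrt n ≤ (n:ℝ) := by
            calc Real.sqrt n ≤ Real.sqrt ((n:ℝ)^2) := Real.sqrt_le_sqrt (by nlinarith)
              _ = (n:ℝ) := Real.sqrt_sq hn0.le
          have h3 : δ * Real.sqrt n ≤ δ * n := mul_le_mul_of_nonneg_left hs hδ0.le
          rw [habs] at h1; linarith
        rw [htgdef, hgdef]; dsimp only; rw [if_neg hk, if_pos h2]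
        have hq2 : ((k:ℝ) - 1)^2 ≤ 2 * ((k:ℝ) - (1 + c n / n))^2 + 2 * q^2 := by
          rw [hqdef]; nlinarith [sq_nonneg ((k:ℝ) - 1 - 2 * (c n / n))]
        calc ((k:ℝ) - 1)^2 * μ n k
            ≤ (2 * ((k:ℝ) - (1 + c n / n))^2 + 2 * q^2) * μ n k :=
              mul_le_mul_of_nonneg_right hq2 (hμnn n k)
          _ = 2 * (((k:ℝ) - (1 + c n / n))^2 * μ n k) + 2 * q^2 * μ n k := by ring
    calc ∑' k, tg k ≤ ∑' k, (2 * g k + 2 * q^2 * μ n k) :=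
          Summable.tsum_le_tsum hterm htgsum ((hgsum.mul_left 2).add (hs0.mul_left (2 * q^2)))
      _ = 2 * (tsum g) + 2 * q^2 * ∑' k, μ n k := by
          rw [Summable.tsum_add (hgsum.mul_left 2) (hs0.mul_left (2 * q^2)),
            tsum_mul_left, tsum_mul_left]
      _ = 2 * (tsum g) + 2 * q^2 := by rw [hsum1]; ring
  have hn2p : (0:ℝ) < (n:ℝ)^2 := pow_pos hn0 2
  -- the key pointwise bound
  have key : ∀ x ∈ Icc (0:ℝ) L,
      |lam n * (n : ℝ) ^ 2 * x *
          ∑' k : ℕ, (φ (x + ((k : ℝ) - 1) / n) - φ x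
            - (((k : ℝ) - 1) / n) * deriv φ x
            - (1 / 2) * (((k : ℝ) - 1) / n) ^ 2 * deriv (deriv φ) x) * μ n k|
      ≤ Λ * L * (η₀ * A) + Λ * L * (2 * M) * (2 * (tsum g) + 2 * q^2) := by
    intro x hx
    obtain ⟨hx0, hxL⟩ := hx
    set T : ℕ → ℝ := fun k => φ (x + ((k : ℝ) - 1) / n) - φ x
        - (((k : ℝ) - 1) / n) * deriv φ x
        - (1 / 2) * (((k : ℝ) - 1) / n) ^ 2 * deriv (deriv φ) x with hTdef
    have hT : ∀ k : ℕ, |T k| ≤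
        (if |((k:ℝ) - 1) / n| ≤ δ then η₀ else 2 * M) * (((k:ℝ) - 1) / n)^2 := by
      intro k
      by_cases hcs : |((k:ℝ) - 1) / n| ≤ δ
      · rw [if_pos hcs, hTdef]
        apply taylor_aux hφ
        intro t ht
        apply hδ
        rw [add_sub_cancel_left]
        exact le_trans (abs_le_of_mem_uIcc' ht) hcs
      · rw [if_neg hcs, hTdef]
        apply taylor_aux hφ
        intro t ht
        calc |deriv (deriv φ) (x + t) - deriv (deriv φ) x|
            ≤ |deriv (deriv φ) (x + t)| + |deriv (deriv φ) x| := abs_sub _ _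
          _ ≤ M + M := add_le_add (hMabs _) (hMabs _)
          _ = 2 * M := by ring
    have hif_le : ∀ k : ℕ, (if |((k:ℝ) - 1) / n| ≤ δ then η₀ else 2 * M) ≤ η₀ + 2 * M := by
      intro k; split
      · linarith
      · linarith
    have hif_nonneg : ∀ k : ℕ, 0 ≤ (if |((k:ℝ) - 1) / n| ≤ δ then η₀ else 2 * M) := by
      intro k; split
      · exact hη₀0.le
      · linarith
    have hdom_le : ∀ k : ℕ, |T k * μ n k| ≤
        (if |((k:ℝ) - 1) / n| ≤ δ then η₀ else 2 * M) * (((k:ℝ) - 1) / n)^2 * μ n k := by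
      intro k
      rw [abs_mul, abs_of_nonneg (hμnn n k)]
      exact mul_le_mul_of_nonneg_right (hT k) (hμnn n k)
    have hcongr : ∀ k : ℕ, (η₀ + 2 * M) / (n:ℝ)^2 * (((k:ℝ) - 1)^2 * μ n k)
        = (η₀ + 2 * M) * (((k:ℝ) - 1) / n)^2 * μ n k := by
      intro k; field_simp
    have hSbig : Summable (fun k : ℕ => (η₀ + 2 * M) * (((k:ℝ) - 1) / n)^2 * μ n k) :=
      (hs2.mul_left _).congr hcongr
    have hdom_sum : Summable (fun k : ℕ =>
        (if |((k:ℝ) - 1) / n| ≤ δ then η₀ else 2 * M) * (((k:ℝ) - 1) / n)^2 * μ n k) := by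
      apply Summable.of_nonneg_of_le
        (fun k => mul_nonneg (mul_nonneg (hif_nonneg k) (sq_nonneg _)) (hμnn n k))
        (fun k => ?_) hSbig
      exact mul_le_mul_of_nonneg_right
        (mul_le_mul_of_nonneg_right (hif_le k) (sq_nonneg _)) (hμnn n k)
    have habs_sum : Summable (fun k : ℕ => |T k * μ n k|) :=
      Summable.of_nonneg_of_le (fun k => abs_nonneg _) hdom_le hdom_sum
    have hTμ : Summable (fun k : ℕ => T k * μ n k) := habs_sum.of_abs
    have hstep : ∀ k : ℕ,
        (if |((k:ℝ) - 1) / n| ≤ δ then η₀ else 2 * M) * (((k:ℝ) - 1) / n)^2 * μ n k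
        ≤ (η₀ * (((k:ℝ) - 1)^2 * μ n k) + 2 * M * tg k) / (n:ℝ)^2 := by
      intro k
      rw [htgdef]; dsimp only
      by_cases hcs : |((k:ℝ) - 1) / n| ≤ δ
      · rw [if_pos hcs, if_pos hcs]
        apply le_of_eq
        field_simp
        ring
      · rw [if_neg hcs, if_neg hcs]
        have h0 : 0 ≤ η₀ * (((k:ℝ) - 1)^2 * μ n k) :=
          mul_nonneg hη₀0.le (mul_nonneg (sq_nonneg _) (hμnn n k))
        calc 2 * M * (((k:ℝ) - 1) / n)^2 * μ n k
            = (2 * M * (((k:ℝ) - 1)^2 * μ n k)) / (n:ℝ)^2 := by field_simp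
          _ ≤ (η₀ * (((k:ℝ) - 1)^2 * μ n k) + 2 * M * (((k:ℝ) - 1)^2 * μ n k)) / (n:ℝ)^2 := by
              gcongr
              linarith
          _ = (η₀ * (((k:ℝ) - 1)^2 * μ n k) + 2 * M * (((k:ℝ) - 1)^2 * μ n k)) / (n:ℝ)^2 := rfl
    have hRHSsum : Summable (fun k : ℕ =>
        (η₀ * (((k:ℝ) - 1)^2 * μ n k) + 2 * M * tg k) / (n:ℝ)^2) :=
      ((hs2.mul_left η₀).add (htgsum.mul_left (2 * M))).div_const _
    have hSabs : |∑' k : ℕ, T k * μ n k| ≤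
        (η₀ * (∑' k : ℕ, ((k:ℝ) - 1)^2 * μ n k) + 2 * M * (∑' k, tg k)) / (n:ℝ)^2 := by
      calc |∑' k : ℕ, T k * μ n k| ≤ ∑' k : ℕ, |T k * μ n k| := by
            simpa only [Real.norm_eq_abs] using
              norm_tsum_le_tsum_norm (f := fun k : ℕ => T k * μ n k)
                (by simpa only [Real.norm_eq_abs] using habs_sum)
        _ ≤ ∑' k : ℕ, (if |((k:ℝ) - 1) / n| ≤ δ then η₀ else 2 * M)
              * (((k:ℝ) - 1) / n)^2 * μ n k := Summable.tsum_le_tsum hdom_le habs_sum hdom_sum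
        _ ≤ ∑' k : ℕ, (η₀ * (((k:ℝ) - 1)^2 * μ n k) + 2 * M * tg k) / (n:ℝ)^2 :=
            Summable.tsum_le_tsum hstep hdom_sum hRHSsum
        _ = (∑' k : ℕ, (η₀ * (((k:ℝ) - 1)^2 * μ n k) + 2 * M * tg k)) / (n:ℝ)^2 := by
            rw [tsum_div_const]
        _ = (η₀ * (∑' k : ℕ, ((k:ℝ) - 1)^2 * μ n k) + 2 * M * (∑' k, tg k)) / (n:ℝ)^2 := by
            rw [Summable.tsum_add (hs2.mul_left η₀) (htgsum.mul_left (2 * M)),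
              tsum_mul_left, tsum_mul_left]
    have hfac : 0 ≤ lam n * (n:ℝ)^2 * x :=
      mul_nonneg (mul_nonneg (hlam n hn1).le (sq_nonneg _)) hx0
    calc |lam n * (n:ℝ)^2 * x * ∑' k : ℕ, T k * μ n k|
        = lam n * (n:ℝ)^2 * x * |∑' k : ℕ, T k * μ n k| := by
          rw [abs_mul, abs_of_nonneg hfac]
      _ ≤ lam n * (n:ℝ)^2 * x *
          ((η₀ * (∑' k : ℕ, ((k:ℝ) - 1)^2 * μ n k) + 2 * M * (∑' k, tg k)) / (n:ℝ)^2) :=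
          mul_le_mul_of_nonneg_left hSabs hfac
      _ = (lam n * x) * (η₀ * (∑' k : ℕ, ((k:ℝ) - 1)^2 * μ n k) + 2 * M * (∑' k, tg k)) := by
          field_simp
      _ ≤ (Λ * L) * (η₀ * A + 2 * M * (2 * (tsum g) + 2 * q^2)) := by
          have hαA' : (∑' k : ℕ, ((k:ℝ) - 1)^2 * μ n k) ≤ A := by
            rw [hAdef]; exact hαA.le
          have hlamΛ' : lam n ≤ Λ := by rw [hΛdef]; exact hlamΛ.le
          have htgnn : 0 ≤ ∑' k, tg k := tsum_nonneg htg_nonneg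
          apply mul_le_mul
          · exact mul_le_mul hlamΛ' hxL hx0 (by linarith)
          · exact add_le_add (mul_le_mul_of_nonneg_left hαA' hη₀0.le)
              (mul_le_mul_of_nonneg_left htail_le (by linarith))
          · exact add_nonneg (mul_nonneg hη₀0.le hαnn) (mul_nonneg (by linarith) htgnn)
          · exact mul_nonneg hΛ0.le hL.le
      _ = Λ * L * (η₀ * A) + Λ * L * (2 * M) * (2 * (tsum g) + 2 * q^2) := by ring
  -- conclusion
  have hbd : Λ * L * (η₀ * A) + Λ * L * (2 * M) * (2 * (tsum g) + 2 * q^2) < η := by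
    rw [hhalf]
    linarith [htn]
  have hnn : 0 ≤ Λ * L * (η₀ * A) + Λ * L * (2 * M) * (2 * (tsum g) + 2 * q^2) := by
    have h1 : 0 ≤ Λ * L * (η₀ * A) :=
      mul_nonneg (mul_nonneg hΛ0.le hL.le) (mul_nonneg hη₀0.le hA0.le)
    have h2 : 0 ≤ Λ * L * (2 * M) * (2 * (tsum g) + 2 * q^2) :=
      mul_nonneg (mul_nonneg (mul_nonneg hΛ0.le hL.le) (by linarith))
        (add_nonneg (by linarith) (by positivity))
    linarith
  have hsup_nonneg : 0 ≤ sSup ((fun x : ℝ => |lam n * (n : ℝ) ^ 2 * x *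
          ∑' k : ℕ, (φ (x + ((k : ℝ) - 1) / n) - φ x
            - (((k : ℝ) - 1) / n) * deriv φ x
            - (1 / 2) * (((k : ℝ) - 1) / n) ^ 2 * deriv (deriv φ) x) * μ n k|) ''
          Icc 0 L) := by
    apply Real.sSup_nonneg
    rintro y ⟨x, hx, rfl⟩
    exact abs_nonneg _
  rw [Real.norm_eq_abs, abs_of_nonneg hsup_nonneg]
  refine lt_of_le_of_lt (Real.sSup_le ?_ hnn) hbd
  rintro y ⟨x, hx, rfl⟩
  exact key x hx
end
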